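/- Let X be a right A-Galois object. Then every nonzero invariant functional ψ_X on X is faithful: if ψ_X(xy) = 0 for all y ∈ X then x = 0, and if ψ_X(yx) = 0 for all y ∈ X then x = 0. -/

import Mathlib

open TensorProduct

noncomputable section

variable (k : Type*) [Field k]

/-- Apply a linear functional to the second tensor factor. -/
def applySnd {M N : Type*} [AddCommGroup M] [Module k M]
    [AddCommGroup N] [Module k N] (f : N →ₗ[k] k) : M ⊗[k] N →ₗ[k] M :=
  (TensorProduct.rid k M).toLinearMap ∘ₗ LinearMap.lTensor M f

/-- Apply a linear functional to the first tensor factor. -/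
def applyFst {M N : Type*} [AddCommGroup M] [Module k M]
    [AddCommGroup N] [Module k N] (f : M →ₗ[k] k) : M ⊗[k] N →ₗ[k] N :=
  (TensorProduct.lid k N).toLinearMap ∘ₗ LinearMap.rTensor N f

variable (A X : Type*) [Ring A] [HopfAlgebra k A] [Ring X] [Algebra k X]

/-- The Galois map `V : X ⊗ X → X ⊗ A`, `x ⊗ y ↦ (x ⊗ 1) * α y`. -/
def galoisV (α : X →ₐ[k] X ⊗[k] A) : X ⊗[k] X →ₗ[k] X ⊗[k] A :=
  LinearMap.mul' k (X ⊗[k] A) ∘ₗ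
    TensorProduct.map ((TensorProduct.mk k X A).flip 1) α.toLinearMap

/-- A Hopf algebra with bijective antipode and faithful left integral `φ`,
together with a right Galois coaction `α` on `X` with trivial coinvariants. -/
structure GaloisContext where
  φ : A →ₗ[k] k
  φ_ne : φ ≠ 0
  φ_integral : ∀ a : A, applySnd k φ (Coalgebra.comul a) = φ a • (1 : A)
  φ_faithful_left : ∀ a : A, (∀ b : A, φ (a * b) = 0) → a = 0
  φ_faithful_right : ∀ a : A, (∀ b : A, φ (b * a) = 0) → a = 0
  antipode_bijective : Function.Bijective (HopfAlgebra.antipode (R := k) (A := A))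
  α : X →ₐ[k] X ⊗[k] A
  coassoc : ∀ x : X,
    TensorProduct.assoc k X A A ((LinearMap.rTensor A α.toLinearMap) (α x))
      = LinearMap.lTensor X (Coalgebra.comul (R := k) (A := A)) (α x)
  counit_id : ∀ x : X,
    applySnd k (Coalgebra.counit (R := k) (A := A)) (α x) = x
  coinv_trivial : ∀ x : X, α x = x ⊗ₜ[k] (1 : A) → ∃ c : k, x = c • (1 : X)
  galois : Function.Bijective (galoisV k A X α)

variable {k A X}

/-- The Galois map as a linear equivalence. -/
def GaloisContext.V (G : GaloisContext k A X) : (X ⊗[k] X) ≃ₗ[k] (X ⊗[k] A) :=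
  LinearEquiv.ofBijective (galoisV k A X G.α) G.galois

/-- The map `β : A → X ⊗ X`, `a ↦ V⁻¹(1 ⊗ a)`. -/
def GaloisContext.β (G : GaloisContext k A X) : A →ₗ[k] X ⊗[k] X :=
  G.V.symm.toLinearMap ∘ₗ TensorProduct.mk k X A 1

end

section BasicAux
open TensorProduct LinearMap Coalgebra HopfAlgebra

variable {k : Type*} [Field k]

@[simp] lemma applySnd_tmul {M N : Type*} [AddCommGroup M] [Module k M]
    [AddCommGroup N] [Module k N] (f : N →ₗ[k] k) (m : M) (n : N) :
    applySnd k f (m ⊗ₜ[k] n) = f n • m := by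
  simp [applySnd]

@[simp] lemma applyFst_tmul {M N : Type*} [AddCommGroup M] [Module k M]
    [AddCommGroup N] [Module k N] (f : M →ₗ[k] k) (m : M) (n : N) :
    applyFst k f (m ⊗ₜ[k] n) = f m • n := by
  simp [applyFst]

lemma apply_comm {M N : Type*} [AddCommGroup M] [Module k M]
    [AddCommGroup N] [Module k N] (f : M →ₗ[k] k) (g : N →ₗ[k] k) (t : M ⊗[k] N) :
    f (applySnd k g t) = g (applyFst k f t) := by
  induction t with
  | zero => simp
  | tmul m n => simp [mul_comm]
  | add s t hs ht => simp [hs, ht]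

/-- Separation: if a separating family of functionals kills all right legs, the tensor is zero. -/
lemma eq_zero_of_applySnd {X A : Type*} [AddCommGroup X] [Module k X]
    [AddCommGroup A] [Module k A]
    (P : (A →ₗ[k] k) → Prop) {t : X ⊗[k] A}
    (hsep : ∀ c : A, (∀ g, P g → g c = 0) → c = 0)
    (h : ∀ g, P g → applySnd k g t = 0) : t = 0 := by
  classical
  set b : Module.Basis _ k X := Module.Basis.ofVectorSpace k X with hb
  set E := (TensorProduct.congr b.repr (LinearEquiv.refl k A)).trans
    (TensorProduct.finsuppScalarLeft k A _) with hE
  have key : ∀ (g : A →ₗ[k] k) (t : X ⊗[k] A) (i), g ((E t) i) = b.repr (applySnd k g t) i := by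
    intro g t i
    induction t with
    | zero => simp
    | tmul x a =>
        simp [hE, TensorProduct.congr_tmul, TensorProduct.finsuppScalarLeft_apply_tmul_apply,
          mul_comm]
    | add s t hs ht => simp [map_add, Finsupp.add_apply, hs, ht]
  have hEt : E t = 0 := by
    ext i
    refine hsep _ ?_
    intro g hg
    rw [key g t i, h g hg]
    simp
  have := congrArg E.symm hEt
  simpa using this

end BasicAux

section AntipodeAux
open TensorProduct LinearMap Coalgebra HopfAlgebra

variable {k : Type*} [Field k] {A : Type*} [Ring A] [HopfAlgebra k A]

local notation "Δ" => Coalgebra.comul (R := k) (A := A)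
local notation "ε" => Coalgebra.counit (R := k) (A := A)
local notation "𝒮" => HopfAlgebra.antipode (R := k) (A := A)

lemma comul_mul' (a b : A) : Δ (a * b) = Δ a * Δ b := by
  simpa using map_mul (Bialgebra.comulAlgHom k A) a b

lemma counit_mul' (a b : A) : ε (a * b) = ε a * ε b := by
  simpa using map_mul (Bialgebra.counitAlgHom k A) a b

lemma antipode_one' : 𝒮 (1 : A) = 1 := by
  have h := HopfAlgebra.mul_antipode_rTensor_comul_apply (R := k) (a := (1 : A))
  have h1 : Δ (1 : A) = (1 : A) ⊗ₜ[k] (1 : A) := by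
    simpa [Algebra.TensorProduct.one_def] using map_one (Bialgebra.comulAlgHom k A)
  rw [h1] at h
  simpa using h

/-- Convolution product on linear maps `A ⊗ A → A`. -/
noncomputable def conv2 (f g : A ⊗[k] A →ₗ[k] A) : A ⊗[k] A →ₗ[k] A :=
  LinearMap.mul' k A ∘ₗ TensorProduct.map f g ∘ₗ
    (TensorProduct.tensorTensorTensorComm k A A A A).toLinearMap ∘ₗ
    TensorProduct.map Δ Δ

lemma conv2_tmul {ι κ : Type*} (f g : A ⊗[k] A →ₗ[k] A) (a b : A) (ra : Coalgebra.Repr k a ι)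
    (rb : Coalgebra.Repr k b κ) :
    conv2 f g (a ⊗ₜ[k] b) = ∑ i ∈ ra.index, ∑ j ∈ rb.index,
      f (ra.left i ⊗ₜ[k] rb.left j) * g (ra.right i ⊗ₜ[k] rb.right j) := by
  have ha : Δ a = ∑ i ∈ ra.index, ra.left i ⊗ₜ[k] ra.right i := ra.eq.symm
  have hb : Δ b = ∑ j ∈ rb.index, rb.left j ⊗ₜ[k] rb.right j := rb.eq.symm
  simp only [conv2, LinearMap.comp_apply, TensorProduct.map_tmul, LinearEquiv.coe_coe]
  rw [ha, hb, TensorProduct.sum_tmul]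
  rw [map_sum, map_sum, map_sum]
  refine Finset.sum_congr rfl fun i _ => ?_
  rw [TensorProduct.tmul_sum, map_sum, map_sum, map_sum]
  refine Finset.sum_congr rfl fun j _ => ?_
  simp [TensorProduct.tensorTensorTensorComm_tmul]

/-- The convolution unit. -/
noncomputable def convUnit : A ⊗[k] A →ₗ[k] A :=
  (Algebra.linearMap k A) ∘ₗ ε ∘ₗ LinearMap.mul' k A

lemma convUnit_tmul (a b : A) : convUnit (a ⊗ₜ[k] b) = algebraMap k A (ε (a * b)) := rfl

lemma repr_counit_smul_left {ι : Type*} {a : A} (r : Coalgebra.Repr k a ι) :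
    ∑ i ∈ r.index, ε (r.right i) • r.left i = a := by
  have h := Coalgebra.sum_tmul_counit_eq (R := k) r
  have h2 := congrArg (TensorProduct.rid k A) h
  rw [map_sum] at h2
  simp only [TensorProduct.rid_tmul, one_smul] at h2
  exact h2

lemma repr_counit_smul_right {ι : Type*} {a : A} (r : Coalgebra.Repr k a ι) :
    ∑ i ∈ r.index, ε (r.left i) • r.right i = a := by
  have h := Coalgebra.sum_counit_tmul_eq (R := k) r
  have h2 := congrArg (TensorProduct.lid k A) h
  rw [map_sum] at h2
  simp only [TensorProduct.lid_tmul, one_smul] at h2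
  exact h2

lemma conv2_unit_right (f : A ⊗[k] A →ₗ[k] A) : conv2 f convUnit = f := by
  apply TensorProduct.ext'
  intro a b
  set ra := ℛ k a
  set rb := ℛ k b
  rw [conv2_tmul f convUnit a b ra rb]
  have step : ∀ i ∈ ra.index, ∀ j ∈ rb.index,
      f (ra.left i ⊗ₜ[k] rb.left j) * convUnit (ra.right i ⊗ₜ[k] rb.right j)
      = f ((ε (ra.right i) • ra.left i) ⊗ₜ[k] (ε (rb.right j) • rb.left j)) := by
    intro i _ j _
    rw [convUnit_tmul, counit_mul', ← Algebra.commutes, ← Algebra.smul_def, mul_smul]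
    simp only [tmul_smul, ← smul_tmul', map_smul]
    rw [smul_comm]
  rw [Finset.sum_congr rfl fun i hi => Finset.sum_congr rfl fun j hj => step i hi j hj]
  have split : ∑ i ∈ ra.index, ∑ j ∈ rb.index,
      f ((ε (ra.right i) • ra.left i) ⊗ₜ[k] (ε (rb.right j) • rb.left j))
      = f ((∑ i ∈ ra.index, ε (ra.right i) • ra.left i) ⊗ₜ[k]
          (∑ j ∈ rb.index, ε (rb.right j) • rb.left j)) := by
    rw [TensorProduct.sum_tmul, map_sum]
    refine Finset.sum_congr rfl fun i _ => ?_
    rw [TensorProduct.tmul_sum, map_sum]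
  rw [split, repr_counit_smul_left, repr_counit_smul_left]

lemma conv2_unit_left (g : A ⊗[k] A →ₗ[k] A) : conv2 convUnit g = g := by
  apply TensorProduct.ext'
  intro a b
  set ra := ℛ k a
  set rb := ℛ k b
  rw [conv2_tmul convUnit g a b ra rb]
  have step : ∀ i ∈ ra.index, ∀ j ∈ rb.index,
      convUnit (ra.left i ⊗ₜ[k] rb.left j) * g (ra.right i ⊗ₜ[k] rb.right j)
      = g ((ε (ra.left i) • ra.right i) ⊗ₜ[k] (ε (rb.left j) • rb.right j)) := by
    intro i _ j _
    rw [convUnit_tmul, counit_mul', ← Algebra.smul_def, mul_smul]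
    simp only [tmul_smul, ← smul_tmul', map_smul]
    rw [smul_comm]
  rw [Finset.sum_congr rfl fun i hi => Finset.sum_congr rfl fun j hj => step i hi j hj]
  have split : ∑ i ∈ ra.index, ∑ j ∈ rb.index,
      g ((ε (ra.left i) • ra.right i) ⊗ₜ[k] (ε (rb.left j) • rb.right j))
      = g ((∑ i ∈ ra.index, ε (ra.left i) • ra.right i) ⊗ₜ[k]
          (∑ j ∈ rb.index, ε (rb.left j) • rb.right j)) := by
    rw [TensorProduct.sum_tmul, map_sum]
    refine Finset.sum_congr rfl fun i _ => ?_
    rw [TensorProduct.tmul_sum, map_sum]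
  rw [split, repr_counit_smul_right, repr_counit_smul_right]


lemma conv2_assoc (f g h : A ⊗[k] A →ₗ[k] A) :
    conv2 (conv2 f g) h = conv2 f (conv2 g h) := by
  apply TensorProduct.ext'
  intro a b
  set ra := ℛ k a with hra
  set rb := ℛ k b with hrb
  set raL : (i : A × A) → Coalgebra.Repr k (ra.left i) (A × A) := fun i => ℛ k (ra.left i) with hraL
  set raR : (i : A × A) → Coalgebra.Repr k (ra.right i) (A × A) := fun i => ℛ k (ra.right i) with hraR
  set rbL : (j : A × A) → Coalgebra.Repr k (rb.left j) (A × A) := fun j => ℛ k (rb.left j) with hrbL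
  set rbR : (j : A × A) → Coalgebra.Repr k (rb.right j) (A × A) := fun j => ℛ k (rb.right j) with hrbR
  set Φ : (A ⊗[k] (A ⊗[k] A)) ⊗[k] (A ⊗[k] (A ⊗[k] A)) →ₗ[k] A :=
    LinearMap.mul' k A ∘ₗ LinearMap.lTensor A (LinearMap.mul' k A) ∘ₗ
      TensorProduct.map f (TensorProduct.map g h) ∘ₗ
      LinearMap.lTensor (A ⊗[k] A) (TensorProduct.tensorTensorTensorComm k A A A A).toLinearMap ∘ₗ
      (TensorProduct.tensorTensorTensorComm k A (A ⊗[k] A) A (A ⊗[k] A)).toLinearMap with hΦ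
  have Φtmul : ∀ x y z u v w : A,
      Φ ((x ⊗ₜ[k] (y ⊗ₜ[k] z)) ⊗ₜ[k] (u ⊗ₜ[k] (v ⊗ₜ[k] w)))
        = f (x ⊗ₜ[k] u) * (g (y ⊗ₜ[k] v) * h (z ⊗ₜ[k] w)) := by
    intro x y z u v w
    simp [hΦ, TensorProduct.tensorTensorTensorComm_tmul]
  have hTa := Coalgebra.sum_tmul_tmul_eq (R := k) ra raL raR
  have hTb := Coalgebra.sum_tmul_tmul_eq (R := k) rb rbL rbR
  have bridge : Φ ((∑ i ∈ ra.index, ∑ m ∈ (raL i).index,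
        (raL i).left m ⊗ₜ[k] ((raL i).right m ⊗ₜ[k] ra.right i)) ⊗ₜ[k]
      (∑ j ∈ rb.index, ∑ n ∈ (rbL j).index,
        (rbL j).left n ⊗ₜ[k] ((rbL j).right n ⊗ₜ[k] rb.right j)))
      = Φ ((∑ i ∈ ra.index, ∑ m ∈ (raR i).index,
        ra.left i ⊗ₜ[k] ((raR i).left m ⊗ₜ[k] (raR i).right m)) ⊗ₜ[k]
      (∑ j ∈ rb.index, ∑ n ∈ (rbR j).index,
        rb.left j ⊗ₜ[k] ((rbR j).left n ⊗ₜ[k] (rbR j).right n))) := by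
    rw [hTa, hTb]
  have e1 : Φ ((∑ i ∈ ra.index, ∑ m ∈ (raL i).index,
        (raL i).left m ⊗ₜ[k] ((raL i).right m ⊗ₜ[k] ra.right i)) ⊗ₜ[k]
      (∑ j ∈ rb.index, ∑ n ∈ (rbL j).index,
        (rbL j).left n ⊗ₜ[k] ((rbL j).right n ⊗ₜ[k] rb.right j)))
      = ∑ i ∈ ra.index, ∑ j ∈ rb.index, ∑ m ∈ (raL i).index, ∑ n ∈ (rbL j).index,
          f ((raL i).left m ⊗ₜ[k] (rbL j).left n) *
            (g ((raL i).right m ⊗ₜ[k] (rbL j).right n) * h (ra.right i ⊗ₜ[k] rb.right j)) := by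
    simp only [TensorProduct.sum_tmul, TensorProduct.tmul_sum, map_sum, Φtmul]
    refine Eq.trans (Finset.sum_congr rfl fun j _ => Finset.sum_comm) ?_
    refine Eq.trans Finset.sum_comm ?_
    exact Finset.sum_congr rfl fun i _ => Finset.sum_congr rfl fun j _ => Finset.sum_comm
  have e2 : Φ ((∑ i ∈ ra.index, ∑ m ∈ (raR i).index,
        ra.left i ⊗ₜ[k] ((raR i).left m ⊗ₜ[k] (raR i).right m)) ⊗ₜ[k]
      (∑ j ∈ rb.index, ∑ n ∈ (rbR j).index,
        rb.left j ⊗ₜ[k] ((rbR j).left n ⊗ₜ[k] (rbR j).right n)))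
      = ∑ i ∈ ra.index, ∑ j ∈ rb.index, ∑ m ∈ (raR i).index, ∑ n ∈ (rbR j).index,
          f (ra.left i ⊗ₜ[k] rb.left j) *
            (g ((raR i).left m ⊗ₜ[k] (rbR j).left n) * h ((raR i).right m ⊗ₜ[k] (rbR j).right n)) := by
    simp only [TensorProduct.sum_tmul, TensorProduct.tmul_sum, map_sum, Φtmul]
    refine Eq.trans (Finset.sum_congr rfl fun j _ => Finset.sum_comm) ?_
    refine Eq.trans Finset.sum_comm ?_
    exact Finset.sum_congr rfl fun i _ => Finset.sum_congr rfl fun j _ => Finset.sum_comm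
  rw [e1, e2] at bridge
  calc conv2 (conv2 f g) h (a ⊗ₜ[k] b)
      = ∑ i ∈ ra.index, ∑ j ∈ rb.index,
          conv2 f g (ra.left i ⊗ₜ[k] rb.left j) * h (ra.right i ⊗ₜ[k] rb.right j) :=
        conv2_tmul _ h a b ra rb
    _ = ∑ i ∈ ra.index, ∑ j ∈ rb.index, ∑ m ∈ (raL i).index, ∑ n ∈ (rbL j).index,
          f ((raL i).left m ⊗ₜ[k] (rbL j).left n) *
            (g ((raL i).right m ⊗ₜ[k] (rbL j).right n) * h (ra.right i ⊗ₜ[k] rb.right j)) := by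
        refine Finset.sum_congr rfl fun i _ => Finset.sum_congr rfl fun j _ => ?_
        rw [conv2_tmul f g _ _ (raL i) (rbL j), Finset.sum_mul]
        refine Finset.sum_congr rfl fun m _ => ?_
        rw [Finset.sum_mul]
        exact Finset.sum_congr rfl fun n _ => mul_assoc _ _ _
    _ = ∑ i ∈ ra.index, ∑ j ∈ rb.index, ∑ m ∈ (raR i).index, ∑ n ∈ (rbR j).index,
          f (ra.left i ⊗ₜ[k] rb.left j) *
            (g ((raR i).left m ⊗ₜ[k] (rbR j).left n) * h ((raR i).right m ⊗ₜ[k] (rbR j).right n)) :=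
        bridge
    _ = conv2 f (conv2 g h) (a ⊗ₜ[k] b) := by
        rw [conv2_tmul f (conv2 g h) a b ra rb]
        refine Finset.sum_congr rfl fun i _ => Finset.sum_congr rfl fun j _ => ?_
        rw [conv2_tmul g h _ _ (raR i) (rbR j), Finset.mul_sum]
        exact Finset.sum_congr rfl fun m _ => by rw [Finset.mul_sum]


/-- A representation of `comul (a*b)` obtained from representations of `a` and `b`. -/
noncomputable def Coalgebra.Repr.mul' {ι κ : Type*} {a b : A} (ra : Coalgebra.Repr k a ι)
    (rb : Coalgebra.Repr k b κ) : Coalgebra.Repr k (a * b) (ι × κ) where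
  index := ra.index ×ˢ rb.index
  left := fun p => ra.left p.1 * rb.left p.2
  right := fun p => ra.right p.1 * rb.right p.2
  eq := by
    rw [comul_mul', ← ra.eq, ← rb.eq, Finset.sum_mul_sum]
    rw [Finset.sum_product]
    exact Finset.sum_congr rfl fun i _ => Finset.sum_congr rfl fun j _ =>
      (Algebra.TensorProduct.tmul_mul_tmul _ _ _ _).symm

theorem antipode_mul_rev (a b : A) : 𝒮 (a * b) = 𝒮 b * 𝒮 a := by
  set F : A ⊗[k] A →ₗ[k] A := 𝒮 ∘ₗ LinearMap.mul' k A with hF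
  set Gm : A ⊗[k] A →ₗ[k] A :=
    LinearMap.mul' k A ∘ₗ TensorProduct.map 𝒮 𝒮 ∘ₗ (TensorProduct.comm k A A).toLinearMap with hGm
  set H : A ⊗[k] A →ₗ[k] A := LinearMap.mul' k A with hH
  have claim1 : conv2 F H = convUnit := by
    apply TensorProduct.ext'
    intro a b
    set ra := ℛ k a
    set rb := ℛ k b
    rw [conv2_tmul F H a b ra rb]
    have key : ∑ i ∈ ra.index, ∑ j ∈ rb.index,
        𝒮 (ra.left i * rb.left j) * (ra.right i * rb.right j)
        = algebraMap k A (ε (a * b)) := by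
      rw [← Finset.sum_product']
      exact HopfAlgebra.sum_antipode_mul_eq_algebraMap_counit (R := k) (Coalgebra.Repr.mul' ra rb)
    have step : ∀ i ∈ ra.index, ∀ j ∈ rb.index,
        F (ra.left i ⊗ₜ[k] rb.left j) * H (ra.right i ⊗ₜ[k] rb.right j)
        = 𝒮 (ra.left i * rb.left j) * (ra.right i * rb.right j) := by
      intro i _ j _
      simp [hF, hH]
    rw [Finset.sum_congr rfl fun i hi => Finset.sum_congr rfl fun j hj => step i hi j hj, key]
    rfl
  have claim2 : conv2 H Gm = convUnit := by
    apply TensorProduct.ext'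
    intro a b
    set ra := ℛ k a
    set rb := ℛ k b
    rw [conv2_tmul H Gm a b ra rb]
    have step : ∀ i ∈ ra.index,
        (∑ j ∈ rb.index, H (ra.left i ⊗ₜ[k] rb.left j) * Gm (ra.right i ⊗ₜ[k] rb.right j))
        = ε b • (ra.left i * 𝒮 (ra.right i)) := by
      intro i _
      have : ∀ j ∈ rb.index, H (ra.left i ⊗ₜ[k] rb.left j) * Gm (ra.right i ⊗ₜ[k] rb.right j)
          = ra.left i * ((rb.left j * 𝒮 (rb.right j)) * 𝒮 (ra.right i)) := by
        intro j _
        simp only [hH, hGm, LinearMap.comp_apply, LinearEquiv.coe_coe, TensorProduct.comm_tmul,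
          TensorProduct.map_tmul, LinearMap.mul'_apply]
        rw [mul_assoc, ← mul_assoc (rb.left j)]
      rw [Finset.sum_congr rfl this, ← Finset.mul_sum, ← Finset.sum_mul,
        HopfAlgebra.sum_mul_antipode_eq_smul (R := k) rb, smul_mul_assoc, one_mul, mul_smul_comm]
    rw [Finset.sum_congr rfl step, ← Finset.smul_sum,
      HopfAlgebra.sum_mul_antipode_eq_smul (R := k) ra, smul_smul]
    have hcu : convUnit (a ⊗ₜ[k] b) = algebraMap k A (ε (a * b)) := rfl
    rw [hcu, counit_mul', mul_comm, Algebra.smul_def, mul_one]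
  have final : F = Gm := by
    calc F = conv2 F convUnit := (conv2_unit_right F).symm
      _ = conv2 F (conv2 H Gm) := by rw [claim2]
      _ = conv2 (conv2 F H) Gm := (conv2_assoc F H Gm).symm
      _ = conv2 convUnit Gm := by rw [claim1]
      _ = Gm := conv2_unit_left Gm
  have := congrArg (fun (L : A ⊗[k] A →ₗ[k] A) => L (a ⊗ₜ[k] b)) final
  simpa [hF, hGm, hH] using this


end AntipodeAux


section GaloisAux
open TensorProduct LinearMap Coalgebra HopfAlgebra
set_option maxHeartbeats 1000000
set_option synthInstance.maxHeartbeats 400000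

variable {k : Type*} [Field k] {A X : Type*} [Ring A] [HopfAlgebra k A]
  [Ring X] [Algebra k X]

local notation "Δ" => Coalgebra.comul (R := k) (A := A)
local notation "ε" => Coalgebra.counit (R := k) (A := A)
local notation "𝒮" => HopfAlgebra.antipode (R := k) (A := A)


namespace GaloisContext

variable (G : GaloisContext k A X)

/-- The antipode as a linear equivalence. -/
noncomputable def Se : A ≃ₗ[k] A := LinearEquiv.ofBijective 𝒮 G.antipode_bijective

lemma Se_apply (a : A) : G.Se a = 𝒮 a := rfl

lemma antipode_algebraMap (r : k) : 𝒮 (algebraMap k A r) = algebraMap k A r := by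
  rw [Algebra.algebraMap_eq_smul_one, map_smul, antipode_one']

lemma sinv_repr {ι : Type*} (c : A) (r : Coalgebra.Repr k c ι) :
    ∑ i ∈ r.index, G.Se.symm (r.right i) * r.left i = algebraMap k A (ε c) := by
  apply G.Se.injective
  rw [map_sum]
  have step : ∀ i ∈ r.index, G.Se (G.Se.symm (r.right i) * r.left i)
      = 𝒮 (r.left i) * r.right i := by
    intro i _
    rw [Se_apply, antipode_mul_rev]
    congr 1
    exact G.Se.apply_symm_apply _
  rw [Finset.sum_congr rfl step, HopfAlgebra.sum_antipode_mul_eq_algebraMap_counit (R := k) r,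
    Se_apply, antipode_algebraMap]

/-- `α` as a linear map. -/
noncomputable abbrev αL : X →ₗ[k] X ⊗[k] A := G.α.toLinearMap

lemma coassoc_symm' (x : X) :
    LinearMap.rTensor A G.αL (G.α x)
      = (TensorProduct.assoc k X A A).symm (LinearMap.lTensor X Δ (G.α x)) := by
  rw [← G.coassoc x]
  exact (LinearEquiv.symm_apply_apply _ _).symm

/-- `c ↦ 1 ⊗ f c`. -/
noncomputable def ins (f : A →ₗ[k] A) : A →ₗ[k] X ⊗[k] A :=
  (Algebra.TensorProduct.includeRight : A →ₐ[k] X ⊗[k] A).toLinearMap ∘ₗ f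

lemma ins_apply (f : A →ₗ[k] A) (c : A) : ins (X := X) f c = (1 : X) ⊗ₜ[k] f c := rfl

lemma collapseR (f : A →ₗ[k] A)
    (hf : ∀ c : A,
      ∑ i ∈ (ℛ k c).index, (ℛ k c).left i * f ((ℛ k c).right i) = algebraMap k A (ε c))
    (t : X ⊗[k] A) :
    LinearMap.mul' k (X ⊗[k] A) ((LinearMap.lTensor (X ⊗[k] A) (ins f))
      ((TensorProduct.assoc k X A A).symm ((LinearMap.lTensor X Δ) t)))
      = (applySnd k ε t) ⊗ₜ[k] (1 : A) := by
  induction t with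
  | zero => simp
  | add s t hs ht => simp only [map_add, TensorProduct.add_tmul, hs, ht]
  | tmul z c =>
      set r := ℛ k c with hrdef
      rw [LinearMap.lTensor_tmul, ← r.eq, TensorProduct.tmul_sum, map_sum, map_sum, map_sum]
      have step : ∀ i ∈ r.index,
          LinearMap.mul' k (X ⊗[k] A) ((LinearMap.lTensor (X ⊗[k] A) (ins f))
            ((TensorProduct.assoc k X A A).symm (z ⊗ₜ[k] (r.left i ⊗ₜ[k] r.right i))))
          = z ⊗ₜ[k] (r.left i * f (r.right i)) := by
        intro i _
        rw [TensorProduct.assoc_symm_tmul, LinearMap.lTensor_tmul, ins_apply,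
          LinearMap.mul'_apply, Algebra.TensorProduct.tmul_mul_tmul, mul_one]
      rw [Finset.sum_congr rfl step, ← TensorProduct.tmul_sum, hf c]
      rw [applySnd_tmul, Algebra.algebraMap_eq_smul_one, TensorProduct.tmul_smul,
        TensorProduct.smul_tmul']

lemma collapseL (f : A →ₗ[k] A)
    (hf : ∀ c : A,
      ∑ i ∈ (ℛ k c).index, f ((ℛ k c).right i) * (ℛ k c).left i = algebraMap k A (ε c))
    (t : X ⊗[k] A) :
    LinearMap.mul' k (X ⊗[k] A) ((TensorProduct.map (ins f) LinearMap.id)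
      ((TensorProduct.comm k (X ⊗[k] A) A)
        ((TensorProduct.assoc k X A A).symm ((LinearMap.lTensor X Δ) t))))
      = (applySnd k ε t) ⊗ₜ[k] (1 : A) := by
  induction t with
  | zero => simp
  | add s t hs ht => simp only [map_add, TensorProduct.add_tmul, hs, ht]
  | tmul z c =>
      set r := ℛ k c with hrdef
      rw [LinearMap.lTensor_tmul, ← r.eq, TensorProduct.tmul_sum, map_sum, map_sum, map_sum,
        map_sum]
      have step : ∀ i ∈ r.index,
          LinearMap.mul' k (X ⊗[k] A) ((TensorProduct.map (ins f) LinearMap.id)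
            ((TensorProduct.comm k (X ⊗[k] A) A)
              ((TensorProduct.assoc k X A A).symm (z ⊗ₜ[k] (r.left i ⊗ₜ[k] r.right i)))))
          = z ⊗ₜ[k] (f (r.right i) * r.left i) := by
        intro i _
        rw [TensorProduct.assoc_symm_tmul, TensorProduct.comm_tmul, TensorProduct.map_tmul,
          ins_apply, LinearMap.id_apply, LinearMap.mul'_apply,
          Algebra.TensorProduct.tmul_mul_tmul, one_mul]
      rw [Finset.sum_congr rfl step, ← TensorProduct.tmul_sum, hf c]
      rw [applySnd_tmul, Algebra.algebraMap_eq_smul_one, TensorProduct.tmul_smul,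
        TensorProduct.smul_tmul']

lemma integral_collapse (t : X ⊗[k] A) :
    applySnd k G.φ ((TensorProduct.assoc k X A A).symm ((LinearMap.lTensor X Δ) t))
      = (applySnd k G.φ t) ⊗ₜ[k] (1 : A) := by
  induction t with
  | zero => simp
  | add s t hs ht => simp only [map_add, TensorProduct.add_tmul, hs, ht]
  | tmul z c =>
      have inner : ∀ u : A ⊗[k] A,
          applySnd k G.φ ((TensorProduct.assoc k X A A).symm (z ⊗ₜ[k] u))
            = z ⊗ₜ[k] (applySnd k G.φ u) := by
        intro u
        induction u with
        | zero => simp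
        | add s t hs ht => simp only [map_add, TensorProduct.tmul_add, hs, ht]
        | tmul b c =>
            rw [TensorProduct.assoc_symm_tmul, applySnd_tmul, applySnd_tmul,
              TensorProduct.tmul_smul]
      rw [LinearMap.lTensor_tmul, inner, G.φ_integral, applySnd_tmul,
        TensorProduct.tmul_smul, TensorProduct.smul_tmul']


lemma galoisV_tmul (x y : X) :
    galoisV k A X G.α (x ⊗ₜ[k] y) = (x ⊗ₜ[k] (1 : A)) * G.α y := by
  simp [galoisV]

lemma etaL (x : X) :
    LinearMap.mul' k (X ⊗[k] A) ((TensorProduct.map G.αL (ins 𝒮)) (G.α x))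
      = x ⊗ₜ[k] (1 : A) := by
  have hcomp : (LinearMap.mul' k (X ⊗[k] A)) ∘ₗ (TensorProduct.map G.αL (ins 𝒮))
      = ((LinearMap.mul' k (X ⊗[k] A)) ∘ₗ (LinearMap.lTensor (X ⊗[k] A) (ins 𝒮))) ∘ₗ
        (LinearMap.rTensor A G.αL) := by
    apply TensorProduct.ext'
    intro z c
    simp
  have := LinearMap.congr_fun hcomp (G.α x)
  rw [LinearMap.comp_apply] at this
  rw [this, LinearMap.comp_apply, LinearMap.comp_apply, G.coassoc_symm' x,
    collapseR 𝒮 (fun c => HopfAlgebra.sum_mul_antipode_eq_algebraMap_counit (R := k) (ℛ k c)) (G.α x),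
    G.counit_id x]

lemma etaR (x : X) :
    LinearMap.mul' k (X ⊗[k] A) ((TensorProduct.map (ins G.Se.symm.toLinearMap) G.αL)
      ((TensorProduct.comm k X A) (G.α x))) = x ⊗ₜ[k] (1 : A) := by
  have hcomp : (LinearMap.mul' k (X ⊗[k] A)) ∘ₗ (TensorProduct.map (ins G.Se.symm.toLinearMap) G.αL)
        ∘ₗ (TensorProduct.comm k X A).toLinearMap
      = ((LinearMap.mul' k (X ⊗[k] A)) ∘ₗ (TensorProduct.map (ins G.Se.symm.toLinearMap) LinearMap.id)
          ∘ₗ (TensorProduct.comm k (X ⊗[k] A) A).toLinearMap) ∘ₗ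
        (LinearMap.rTensor A G.αL) := by
    apply TensorProduct.ext'
    intro z c
    simp
  have := LinearMap.congr_fun hcomp (G.α x)
  simp only [LinearMap.comp_apply, LinearEquiv.coe_coe] at this
  rw [this, G.coassoc_symm' x,
    collapseL G.Se.symm.toLinearMap (fun c => G.sinv_repr c (ℛ k c)) (G.α x),
    G.counit_id x]


end GaloisContext

section ProdLemmas
variable (ψ : X →ₗ[k] k) (φ : A →ₗ[k] k)

lemma applyFst_mul_tmul_one (t : X ⊗[k] A) (z : X) :
    applyFst k ψ (t * (z ⊗ₜ[k] (1 : A))) = applyFst k (ψ ∘ₗ LinearMap.mulRight k z) t := by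
  induction t with
  | zero => simp
  | add s t hs ht => simp [add_mul, hs, ht]
  | tmul u c => simp [Algebra.TensorProduct.tmul_mul_tmul]

lemma applyFst_tmul_one_mul (t : X ⊗[k] A) (z : X) :
    applyFst k ψ ((z ⊗ₜ[k] (1 : A)) * t) = applyFst k (ψ ∘ₗ LinearMap.mulLeft k z) t := by
  induction t with
  | zero => simp
  | add s t hs ht => simp [mul_add, hs, ht]
  | tmul u c => simp [Algebra.TensorProduct.tmul_mul_tmul]

lemma applyFst_mul_one_tmul (t : X ⊗[k] A) (b : A) :
    applyFst k ψ (t * ((1 : X) ⊗ₜ[k] b)) = applyFst k ψ t * b := by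
  induction t with
  | zero => simp
  | add s t hs ht => simp [add_mul, hs, ht, add_mul]
  | tmul u c => simp [Algebra.TensorProduct.tmul_mul_tmul, smul_mul_assoc]

lemma applyFst_one_tmul_mul (t : X ⊗[k] A) (b : A) :
    applyFst k ψ (((1 : X) ⊗ₜ[k] b) * t) = b * applyFst k ψ t := by
  induction t with
  | zero => simp
  | add s t hs ht => simp [mul_add, hs, ht]
  | tmul u c => simp [Algebra.TensorProduct.tmul_mul_tmul, mul_smul_comm]

lemma applySnd_tmul_one_mul (t : X ⊗[k] A) (z : X) :
    applySnd k φ ((z ⊗ₜ[k] (1 : A)) * t) = z * applySnd k φ t := by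
  induction t with
  | zero => simp
  | add s t hs ht => simp [mul_add, hs, ht]
  | tmul u c => simp [Algebra.TensorProduct.tmul_mul_tmul, mul_smul_comm]

lemma applySnd_mul_tmul_one (t : X ⊗[k] A) (z : X) :
    applySnd k φ (t * (z ⊗ₜ[k] (1 : A))) = applySnd k φ t * z := by
  induction t with
  | zero => simp
  | add s t hs ht => simp [add_mul, hs, ht]
  | tmul u c => simp [Algebra.TensorProduct.tmul_mul_tmul, smul_mul_assoc]

lemma applySnd_one_tmul_mul (t : X ⊗[k] A) (b : A) :
    applySnd k φ (((1 : X) ⊗ₜ[k] b) * t) = applySnd k (φ ∘ₗ LinearMap.mulLeft k b) t := by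
  induction t with
  | zero => simp
  | add s t hs ht => simp [mul_add, hs, ht]
  | tmul u c => simp [Algebra.TensorProduct.tmul_mul_tmul]

lemma applySnd_mul_one_tmul (t : X ⊗[k] A) (b : A) :
    applySnd k φ (t * ((1 : X) ⊗ₜ[k] b)) = applySnd k (φ ∘ₗ LinearMap.mulRight k b) t := by
  induction t with
  | zero => simp
  | add s t hs ht => simp [add_mul, hs, ht]
  | tmul u c => simp [Algebra.TensorProduct.tmul_mul_tmul]

end ProdLemmas

namespace GaloisContext

variable (G : GaloisContext k A X)

lemma step1L (ψX : X →ₗ[k] k)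
    (hψX : ∀ x : X, applyFst k ψX (G.α x) = ψX x • (1 : A)) (x : X) (hx : ∀ y, ψX (x * y) = 0) (z : X) :
    applyFst k (ψX ∘ₗ LinearMap.mulRight k z) (G.α x) = 0 := by
  set Λ : X ⊗[k] A →ₗ[k] A := applyFst k ψX ∘ₗ LinearMap.mulLeft k (G.α x) with hΛ
  have hcomp : Λ ∘ₗ (LinearMap.mul' k (X ⊗[k] A) ∘ₗ TensorProduct.map G.αL (ins 𝒮)) = 0 := by
    apply TensorProduct.ext'
    intro u c
    simp only [LinearMap.comp_apply, TensorProduct.map_tmul, LinearMap.mul'_apply,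
      LinearMap.zero_apply, hΛ, LinearMap.mulLeft_apply, ins_apply,
      AlgHom.toLinearMap_apply]
    rw [← mul_assoc, ← map_mul, applyFst_mul_one_tmul, hψX, hx, zero_smul, zero_mul]
  have e1 : applyFst k (ψX ∘ₗ LinearMap.mulRight k z) (G.α x)
      = Λ (z ⊗ₜ[k] (1 : A)) := by
    rw [hΛ]
    simp only [LinearMap.comp_apply, LinearMap.mulLeft_apply]
    rw [applyFst_mul_tmul_one]
  rw [e1, ← G.etaL z]
  exact LinearMap.congr_fun hcomp (G.α z)

lemma step1R (ψX : X →ₗ[k] k)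
    (hψX : ∀ x : X, applyFst k ψX (G.α x) = ψX x • (1 : A)) (x : X) (hx : ∀ y, ψX (y * x) = 0) (z : X) :
    applyFst k (ψX ∘ₗ LinearMap.mulLeft k z) (G.α x) = 0 := by
  set Λ : X ⊗[k] A →ₗ[k] A := applyFst k ψX ∘ₗ LinearMap.mulRight k (G.α x) with hΛ
  have hcomp : Λ ∘ₗ (LinearMap.mul' k (X ⊗[k] A) ∘ₗ
      TensorProduct.map (ins G.Se.symm.toLinearMap) G.αL ∘ₗ
      (TensorProduct.comm k X A).toLinearMap) = 0 := by
    apply TensorProduct.ext'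
    intro u c
    simp only [LinearMap.comp_apply, LinearEquiv.coe_coe, TensorProduct.comm_tmul,
      TensorProduct.map_tmul, LinearMap.mul'_apply, LinearMap.zero_apply, hΛ,
      LinearMap.mulRight_apply, ins_apply, AlgHom.toLinearMap_apply]
    rw [mul_assoc, ← map_mul, applyFst_one_tmul_mul, hψX, hx, zero_smul, mul_zero]
  have e1 : applyFst k (ψX ∘ₗ LinearMap.mulLeft k z) (G.α x)
      = Λ (z ⊗ₜ[k] (1 : A)) := by
    rw [hΛ]
    simp only [LinearMap.comp_apply, LinearMap.mulRight_apply]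
    rw [applyFst_tmul_one_mul]
  rw [e1, ← G.etaR z]
  exact LinearMap.congr_fun hcomp (G.α z)

/-- The invariant functional built from the integral. -/
noncomputable def cval (x : X) : X := applySnd k G.φ (G.α x)

lemma cval_coinv (x : X) : G.α (G.cval x) = G.cval x ⊗ₜ[k] (1 : A) := by
  have hcomp : G.αL ∘ₗ applySnd k G.φ
      = (applySnd k G.φ : (X ⊗[k] A) ⊗[k] A →ₗ[k] X ⊗[k] A) ∘ₗ LinearMap.rTensor A G.αL := by
    apply TensorProduct.ext'
    intro z c
    simp
  have h1 : G.α (G.cval x) = applySnd k G.φ (LinearMap.rTensor A G.αL (G.α x)) :=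
    LinearMap.congr_fun hcomp (G.α x)
  rw [h1, G.coassoc_symm' x, G.integral_collapse (G.α x)]
  rfl

lemma cval_scalar (x : X) : ∃ r : k, G.cval x = r • (1 : X) :=
  G.coinv_trivial _ (G.cval_coinv x)

lemma exists_psi_ne (ψX : X →ₗ[k] k) (hψX_ne : ψX ≠ 0) : ∃ w : X, ψX w ≠ 0 := by
  by_contra hcon
  push_neg at hcon
  exact hψX_ne (LinearMap.ext fun w => hcon w)

lemma cval_eq_zero_L (ψX : X →ₗ[k] k) (hψX_ne : ψX ≠ 0)
    (hψX : ∀ x : X, applyFst k ψX (G.α x) = ψX x • (1 : A)) (x : X) (hx : ∀ y, ψX (x * y) = 0) : G.cval x = 0 := by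
  obtain ⟨r, hr⟩ := G.cval_scalar x
  obtain ⟨w, hw⟩ := exists_psi_ne ψX hψX_ne
  have h1 : (ψX ∘ₗ LinearMap.mulRight k w) (G.cval x) = 0 := by
    rw [cval, apply_comm (ψX ∘ₗ LinearMap.mulRight k w) G.φ (G.α x),
      G.step1L ψX hψX x hx w, map_zero]
  rw [hr] at h1
  simp only [LinearMap.comp_apply, LinearMap.mulRight_apply, smul_mul_assoc, one_mul,
    map_smul, smul_eq_mul] at h1
  rcases mul_eq_zero.mp h1 with h | h
  · rw [hr, h, zero_smul]
  · exact absurd h hw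

lemma cval_eq_zero_R (ψX : X →ₗ[k] k) (hψX_ne : ψX ≠ 0)
    (hψX : ∀ x : X, applyFst k ψX (G.α x) = ψX x • (1 : A)) (x : X) (hx : ∀ y, ψX (y * x) = 0) : G.cval x = 0 := by
  obtain ⟨r, hr⟩ := G.cval_scalar x
  obtain ⟨w, hw⟩ := exists_psi_ne ψX hψX_ne
  have h1 : (ψX ∘ₗ LinearMap.mulLeft k w) (G.cval x) = 0 := by
    rw [cval, apply_comm (ψX ∘ₗ LinearMap.mulLeft k w) G.φ (G.α x),
      G.step1R ψX hψX x hx w, map_zero]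
  rw [hr] at h1
  simp only [LinearMap.comp_apply, LinearMap.mulLeft_apply, mul_smul_comm, mul_one,
    map_smul, smul_eq_mul] at h1
  rcases mul_eq_zero.mp h1 with h | h
  · rw [hr, h, zero_smul]
  · exact absurd h hw

/-- The second canonical map `u ⊗ v ↦ α(u)(v ⊗ 1)`. -/
noncomputable def Wmap : X ⊗[k] X →ₗ[k] X ⊗[k] A :=
  LinearMap.mul' k (X ⊗[k] A) ∘ₗ
    TensorProduct.map G.αL ((TensorProduct.mk k X A).flip 1)

lemma Wmap_tmul (u v : X) : G.Wmap (u ⊗ₜ[k] v) = G.α u * (v ⊗ₜ[k] (1 : A)) := by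
  simp [Wmap]

lemma galoisV_beta (a : A) : galoisV k A X G.α (G.β a) = (1 : X) ⊗ₜ[k] a := by
  have : G.β a = G.V.symm ((1 : X) ⊗ₜ[k] a) := rfl
  rw [this]
  exact G.V.apply_symm_apply _

lemma rTensor_algmap (t : X ⊗[k] A) :
    LinearMap.rTensor A G.αL t
      = (Algebra.TensorProduct.map G.α (AlgHom.id k A)).toLinearMap t := by
  induction t with
  | zero => simp
  | add s t hs ht => simp [hs, ht]
  | tmul z c => simp

lemma Wmap_beta (a : A) : G.Wmap (G.β a) = (1 : X) ⊗ₜ[k] (𝒮 a) := by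
  set Ψ : (X ⊗[k] A) ⊗[k] A →ₗ[k] X ⊗[k] A :=
    LinearMap.mul' k (X ⊗[k] A) ∘ₗ LinearMap.lTensor (X ⊗[k] A) (ins 𝒮) with hΨ
  have hPsi_mul : ∀ (q : X ⊗[k] A) (rr : (X ⊗[k] A) ⊗[k] A),
      Ψ ((q ⊗ₜ[k] (1 : A)) * rr) = q * Ψ rr := by
    intro q rr
    induction rr with
    | zero => simp
    | add s t hs ht => simp [mul_add, hs, ht]
    | tmul w c =>
        simp only [hΨ, LinearMap.comp_apply, Algebra.TensorProduct.tmul_mul_tmul, one_mul,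
          LinearMap.lTensor_tmul, LinearMap.mul'_apply, mul_assoc]
  have hcomp : Ψ ∘ₗ (LinearMap.rTensor A G.αL) ∘ₗ (galoisV k A X G.α) = G.Wmap := by
    apply TensorProduct.ext'
    intro u v
    simp only [LinearMap.comp_apply]
    have hmul : LinearMap.rTensor A G.αL ((u ⊗ₜ[k] (1 : A)) * G.α v)
        = (G.α u ⊗ₜ[k] (1 : A)) * LinearMap.rTensor A G.αL (G.α v) := by
      rw [rTensor_algmap, rTensor_algmap]
      simp only [AlgHom.toLinearMap_apply]
      rw [map_mul]
      congr 1
    rw [galoisV_tmul, hmul, hPsi_mul, G.coassoc_symm' v]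
    have e3 : Ψ ((TensorProduct.assoc k X A A).symm ((LinearMap.lTensor X Δ) (G.α v)))
        = (applySnd k ε (G.α v)) ⊗ₜ[k] (1 : A) :=
      collapseR 𝒮 (fun c => HopfAlgebra.sum_mul_antipode_eq_algebraMap_counit (R := k) (ℛ k c)) (G.α v)
    rw [e3, G.counit_id v, Wmap_tmul]
  have := LinearMap.congr_fun hcomp (G.β a)
  simp only [LinearMap.comp_apply] at this
  rw [galoisV_beta] at this
  rw [← this, LinearMap.rTensor_tmul]
  have hone : G.αL (1 : X) = (1 : X ⊗[k] A) := map_one G.α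
  rw [hone]
  simp [hΨ, ins_apply, Algebra.TensorProduct.one_def]


lemma theta_left_faithful (x : X)
    (h : ∀ y : X, applySnd k G.φ (G.α x * G.α y) = 0) : x = 0 := by
  have h1 : ∀ p : X ⊗[k] X, applySnd k G.φ (G.α x * G.Wmap p) = 0 := by
    intro p
    induction p with
    | zero => simp
    | add s t hs ht => simp only [map_add, mul_add, hs, ht, add_zero]
    | tmul u v =>
        rw [G.Wmap_tmul, ← mul_assoc, applySnd_mul_tmul_one, h u, zero_mul]
  have h2 : ∀ (x0 : X) (b : A), applySnd k G.φ (G.α x * (x0 ⊗ₜ[k] b)) = 0 := by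
    intro x0 b
    have hW2 : ∀ p : X ⊗[k] X,
        G.Wmap ((LinearMap.lTensor X (LinearMap.mulRight k x0)) p)
          = G.Wmap p * (x0 ⊗ₜ[k] (1 : A)) := by
      intro p
      induction p with
      | zero => simp
      | add s t hs ht => simp only [map_add, hs, ht, add_mul]
      | tmul u v =>
          rw [LinearMap.lTensor_tmul, G.Wmap_tmul, G.Wmap_tmul, LinearMap.mulRight_apply,
            mul_assoc, Algebra.TensorProduct.tmul_mul_tmul, mul_one]
    have hb : (x0 ⊗ₜ[k] b : X ⊗[k] A)
        = G.Wmap ((LinearMap.lTensor X (LinearMap.mulRight k x0)) (G.β (G.Se.symm b))) := by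
      rw [hW2, G.Wmap_beta]
      have : 𝒮 (G.Se.symm b) = b := G.Se.apply_symm_apply b
      rw [this, Algebra.TensorProduct.tmul_mul_tmul, one_mul, mul_one]
    rw [hb]
    exact h1 _
  have h3 : ∀ b : A, applySnd k (G.φ ∘ₗ LinearMap.mulRight k b) (G.α x) = 0 := by
    intro b
    rw [← applySnd_mul_one_tmul]
    exact h2 1 b
  have ht : G.α x = 0 := by
    refine eq_zero_of_applySnd (fun g => ∃ b : A, g = G.φ ∘ₗ LinearMap.mulRight k b) ?_ ?_
    · intro c hc
      refine G.φ_faithful_left c fun b => ?_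
      simpa using hc _ ⟨b, rfl⟩
    · rintro g ⟨b, rfl⟩
      exact h3 b
  have := G.counit_id x
  rw [ht, map_zero] at this
  exact this.symm

lemma theta_right_faithful (x : X)
    (h : ∀ y : X, applySnd k G.φ (G.α y * G.α x) = 0) : x = 0 := by
  have h1 : ∀ p : X ⊗[k] X, applySnd k G.φ (galoisV k A X G.α p * G.α x) = 0 := by
    intro p
    induction p with
    | zero => simp
    | add s t hs ht => simp only [map_add, add_mul, hs, ht, add_zero]
    | tmul z y =>
        rw [G.galoisV_tmul, mul_assoc, applySnd_tmul_one_mul, h y, mul_zero]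
  have h2 : ∀ s : X ⊗[k] A, applySnd k G.φ (s * G.α x) = 0 := by
    intro s
    have : s = galoisV k A X G.α (G.V.symm s) := (G.V.apply_symm_apply s).symm
    rw [this]
    exact h1 _
  have h3 : ∀ b : A, applySnd k (G.φ ∘ₗ LinearMap.mulLeft k b) (G.α x) = 0 := by
    intro b
    rw [← applySnd_one_tmul_mul]
    exact h2 ((1 : X) ⊗ₜ[k] b)
  have ht : G.α x = 0 := by
    refine eq_zero_of_applySnd (fun g => ∃ b : A, g = G.φ ∘ₗ LinearMap.mulLeft k b) ?_ ?_
    · intro c hc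
      refine G.φ_faithful_right c fun b => ?_
      simpa using hc _ ⟨b, rfl⟩
    · rintro g ⟨b, rfl⟩
      exact h3 b
  have := G.counit_id x
  rw [ht, map_zero] at this
  exact this.symm

end GaloisContext

theorem galois_object_invariant_functional_faithful'
    {k : Type*} [Field k] {A X : Type*} [Ring A] [HopfAlgebra k A]
    [Ring X] [Algebra k X] [Nontrivial X]
    (G : GaloisContext k A X)
    (ψX : X →ₗ[k] k) (hψX_ne : ψX ≠ 0)
    (hψX : ∀ x : X, applyFst k ψX (G.α x) = ψX x • (1 : A)) :
    (∀ x : X, (∀ y : X, ψX (x * y) = 0) → x = 0) ∧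
    (∀ x : X, (∀ y : X, ψX (y * x) = 0) → x = 0) := by
  constructor
  · intro x hx
    refine G.theta_left_faithful x fun y => ?_
    rw [← map_mul]
    exact G.cval_eq_zero_L ψX hψX_ne hψX (x * y)
      (fun y' => by rw [mul_assoc]; exact hx (y * y'))
  · intro x hx
    refine G.theta_right_faithful x fun y => ?_
    rw [← map_mul]
    exact G.cval_eq_zero_R ψX hψX_ne hψX (y * x)
      (fun y' => by rw [← mul_assoc]; exact hx (y' * y))

end GaloisAux

theorem galois_object_invariant_functional_faithful
    {k : Type*} [Field k] {A X : Type*} [Ring A] [HopfAlgebra k A]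
    [Ring X] [Algebra k X] [Nontrivial X]
    (G : GaloisContext k A X)
    (ψX : X →ₗ[k] k) (hψX_ne : ψX ≠ 0)
    (hψX : ∀ x : X, applyFst k ψX (G.α x) = ψX x • (1 : A)) :
    (∀ x : X, (∀ y : X, ψX (x * y) = 0) → x = 0) ∧
    (∀ x : X, (∀ y : X, ψX (y * x) = 0) → x = 0) :=
  galois_object_invariant_functional_faithful' G ψX hψX_ne hψX
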